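/- The kernel K(x, y) = exp(-‖x - y‖²) on a real Hilbert space H is positive definite: for any finite collection of points x₁, …, xₙ ∈ H and real scalars c₁, …, cₙ, one has ∑ᵢ∑ⱼ cᵢ cⱼ K(xᵢ, xⱼ) ≥ 0. -/

import Mathlib

open Finset

private lemma key_fin (n d k : ℕ) (c : Fin n → ℝ) (f : Fin n → Fin d → ℝ) :
    0 ≤ ∑ i, ∑ j, c i * c j * (∑ s, f i s * f j s) ^ k := by
  have hpow : ∀ i j : Fin n, (∑ s, f i s * f j s) ^ k =
      ∑ a ∈ Fintype.piFinset (fun _ : Fin k => (univ : Finset (Fin d))),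
        (∏ m, f i (a m)) * (∏ m, f j (a m)) := by
    intro i j
    calc (∑ s, f i s * f j s) ^ k = ∏ _m : Fin k, ∑ s, f i s * f j s := by
          rw [Finset.prod_const, Finset.card_univ, Fintype.card_fin]
      _ = ∑ a ∈ Fintype.piFinset (fun _ : Fin k => (univ : Finset (Fin d))),
            ∏ m, f i (a m) * f j (a m) := by
          rw [Finset.prod_univ_sum]
      _ = _ := by
          refine Finset.sum_congr rfl fun a _ => ?_
          rw [Finset.prod_mul_distrib]
  calc (0:ℝ) ≤ ∑ a ∈ Fintype.piFinset (fun _ : Fin k => (univ : Finset (Fin d))),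
        (∑ i, c i * ∏ m, f i (a m)) ^ 2 :=
      Finset.sum_nonneg fun a _ => sq_nonneg _
    _ = ∑ i, ∑ j, c i * c j * (∑ s, f i s * f j s) ^ k := by
      simp_rw [hpow, Finset.mul_sum, sq, Finset.sum_mul, Finset.mul_sum]
      rw [Finset.sum_comm]
      refine Finset.sum_congr rfl fun i _ => ?_
      rw [Finset.sum_comm]
      refine Finset.sum_congr rfl fun j _ => Finset.sum_congr rfl fun a _ => ?_
      ring

private lemma key_gram {H : Type*} [NormedAddCommGroup H] [InnerProductSpace ℝ H]
    (n k : ℕ) (x : Fin n → H) (c : Fin n → ℝ) :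
    0 ≤ ∑ i, ∑ j, c i * c j * (inner ℝ (x i) (x j) : ℝ) ^ k := by
  set V := Submodule.span ℝ (Set.range x) with hV
  haveI : FiniteDimensional ℝ V :=
    FiniteDimensional.span_of_finite ℝ (Set.finite_range x)
  set b := stdOrthonormalBasis ℝ V
  have hx : ∀ i, x i ∈ V := fun i => Submodule.subset_span ⟨i, rfl⟩
  set y : Fin n → V := fun i => ⟨x i, hx i⟩ with hy
  have hinner : ∀ i j, (inner ℝ (x i) (x j) : ℝ) =
      ∑ s, (inner ℝ (y i) (b s) : ℝ) * (inner ℝ (y j) (b s) : ℝ) := by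
    intro i j
    have h2 : (inner ℝ (x i) (x j) : ℝ) = inner ℝ (y i) (y j) := rfl
    rw [h2, ← b.sum_inner_mul_inner (y i) (y j)]
    refine Finset.sum_congr rfl fun s _ => ?_
    rw [real_inner_comm (b s) (y j)]
  simp_rw [hinner]
  exact key_fin n _ k c fun i s => (inner ℝ (y i) (b s) : ℝ)

/-- The kernel `K(x,y) = exp (-‖x-y‖²)` is positive definite on a real inner product space. -/
theorem stmt_5 {H : Type*} [NormedAddCommGroup H] [InnerProductSpace ℝ H]
    (n : ℕ) (x : Fin n → H) (c : Fin n → ℝ) :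
    0 ≤ ∑ i, ∑ j, c i * c j * Real.exp (-‖x i - x j‖ ^ 2) := by
  set d : Fin n → ℝ := fun i => c i * Real.exp (-‖x i‖ ^ 2) with hd
  have hnorm : ∀ i j : Fin n, (-‖x i - x j‖ ^ 2 : ℝ) =
      (-‖x i‖ ^ 2) + (-‖x j‖ ^ 2) + 2 * (inner ℝ (x i) (x j) : ℝ) := by
    intro i j
    have := @norm_sub_sq_real H _ _ (x i) (x j)
    nlinarith [this]
  have hexp : ∀ i j : Fin n, c i * c j * Real.exp (-‖x i - x j‖ ^ 2) =
      d i * d j * Real.exp (2 * (inner ℝ (x i) (x j) : ℝ)) := by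
    intro i j
    rw [hnorm i j, Real.exp_add, Real.exp_add, hd]
    ring
  simp_rw [hexp]
  have hser : ∀ t : ℝ, Real.exp t = ∑' m : ℕ, t ^ m / m.factorial := by
    intro t
    rw [Real.exp_eq_exp_ℝ, NormedSpace.exp_eq_tsum ℝ]
    refine tsum_congr fun m => ?_
    rw [smul_eq_mul, div_eq_inv_mul]
  have hsum : ∀ i j : Fin n, Summable (fun m : ℕ =>
      d i * d j * ((2 * (inner ℝ (x i) (x j) : ℝ)) ^ m / m.factorial)) :=
    fun i j => (Real.summable_pow_div_factorial _).mul_left _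
  have step1 : (0:ℝ) ≤ ∑' m : ℕ, ∑ i, ∑ j,
      d i * d j * ((2 * (inner ℝ (x i) (x j) : ℝ)) ^ m / m.factorial) := by
    refine tsum_nonneg fun m => ?_
    have hkg := key_gram n m x d
    have heq : (2 ^ m / m.factorial : ℝ) *
        (∑ i, ∑ j, d i * d j * (inner ℝ (x i) (x j) : ℝ) ^ m) =
        ∑ i, ∑ j, d i * d j * ((2 * (inner ℝ (x i) (x j) : ℝ)) ^ m / m.factorial) := by
      rw [Finset.mul_sum]
      refine Finset.sum_congr rfl fun i _ => ?_
      rw [Finset.mul_sum]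
      refine Finset.sum_congr rfl fun j _ => ?_
      rw [mul_pow]
      ring
    rw [← heq]
    positivity
  have step2 : ∑' m : ℕ, ∑ i, ∑ j,
      d i * d j * ((2 * (inner ℝ (x i) (x j) : ℝ)) ^ m / m.factorial) =
      ∑ i, ∑ j, d i * d j * Real.exp (2 * (inner ℝ (x i) (x j) : ℝ)) := by
    rw [Summable.tsum_finsetSum fun i _ => summable_sum fun j _ => hsum i j]
    refine Finset.sum_congr rfl fun i _ => ?_
    rw [Summable.tsum_finsetSum fun j _ => hsum i j]
    refine Finset.sum_congr rfl fun j _ => ?_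
    rw [hser, ← tsum_mul_left]
  linarith
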